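/- There exists a linear order L of cardinality ℵ_1 such that the product L × L, partially ordered coordinatewise ((a,b) ≤ (a',b') iff a ≤ a' and b ≤ b'), is the union of countably many chains. -/

import Mathlib

open Cardinal

open Cardinal Set

noncomputable section
namespace Stmt12Aux

open scoped Classical

/-- `ω₁` as an ordinal. -/
def W1 : Ordinal := (Cardinal.aleph 1).ord

lemma card_le_of_lt_W1 {β : Ordinal} (h : β < W1) : β.card ≤ ℵ₀ := by
  have h2 : β.card < Cardinal.aleph 1 := Cardinal.lt_ord.mp h
  rwa [← Cardinal.succ_aleph0, Order.lt_succ_iff] at h2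

lemma exists_cofinal_seq {β : Ordinal} (hl : Order.IsSuccLimit β) (hc : β.card ≤ ℵ₀) :
    ∃ g : ℕ → Ordinal, (∀ k, g k < β) ∧ ∀ ξ, ξ < β → ∃ k, ξ < g k := by
  have hcnt : Countable (Set.Iio β) := by
    rw [← Cardinal.mk_le_aleph0_iff, Ordinal.mk_Iio_ordinal, Cardinal.lift_le_aleph0]
    exact hc
  have hne : Nonempty (Set.Iio β) := ⟨⟨0, hl.pos⟩⟩
  obtain ⟨f, hf⟩ := exists_surjective_nat (Set.Iio β)
  refine ⟨fun k => (f k).1, fun k => (f k).2, fun ξ hξ => ?_⟩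
  obtain ⟨k, hk⟩ := hf ⟨Order.succ ξ, hl.succ_lt hξ⟩
  refine ⟨k, ?_⟩
  show ξ < (f k : Ordinal)
  rw [hk]
  exact Order.lt_succ ξ

/-- a choice of cofinal `ω`-sequence in `β` (junk otherwise). -/
def gseq (β : Ordinal) : ℕ → Ordinal :=
  if h : Order.IsSuccLimit β ∧ β.card ≤ ℵ₀ then (exists_cofinal_seq h.1 h.2).choose else fun _ => 0

lemma gseq_lt {β : Ordinal} (h1 : Order.IsSuccLimit β) (h2 : β.card ≤ ℵ₀) (k : ℕ) :
    gseq β k < β := by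
  rw [gseq, dif_pos ⟨h1, h2⟩]
  exact (exists_cofinal_seq h1 h2).choose_spec.1 k

lemma gseq_cofinal {β : Ordinal} (h1 : Order.IsSuccLimit β) (h2 : β.card ≤ ℵ₀) {ξ : Ordinal}
    (hξ : ξ < β) : ∃ k, ξ < gseq β k := by
  rw [gseq, dif_pos ⟨h1, h2⟩]
  exact (exists_cofinal_seq h1 h2).choose_spec.2 ξ hξ

lemma isLimit_of_aux {β : Ordinal} (h0 : ¬ β = 0) (hs : ¬ ∃ γ, β = Order.succ γ) :
    Order.IsSuccLimit β := ((Ordinal.zero_or_succ_or_isSuccLimit β).resolve_left h0).resolve_left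
      (fun ⟨γ, hγ⟩ => hs ⟨γ, hγ.symm⟩)

/-- body of the recursion defining the coherent sequence. -/
def eBody (β : Ordinal) (rec : ∀ γ, γ < β → Ordinal → ℕ) : Ordinal → ℕ :=
  if h0 : β = 0 then fun _ => 1
  else if hs : ∃ γ, β = Order.succ γ then
    rec hs.choose ((Order.lt_succ hs.choose).trans_le hs.choose_spec.ge)
  else if hc : β.card ≤ ℵ₀ then
    fun ξ =>
      if hξ : ∃ k, ξ < gseq β k then
        max (rec (gseq β (sInf {k | ξ < gseq β k}))
          (gseq_lt (isLimit_of_aux h0 hs) hc _) ξ) (sInf {k | ξ < gseq β k})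
      else 1
  else fun _ => 1

/-- The coherent finite-to-one sequence. -/
def e : Ordinal → Ordinal → ℕ := Ordinal.lt_wf.fix eBody

lemma e_def (β : Ordinal) : e β = eBody β fun γ _ => e γ :=
  Ordinal.lt_wf.fix_eq eBody β

lemma e_zero : e 0 = fun _ => 1 := by
  rw [e_def]; simp [eBody]

lemma e_succ (γ : Ordinal) : e (Order.succ γ) = e γ := by
  rw [e_def]
  have h0 : ¬ Order.succ γ = 0 := Ordinal.succ_ne_zero γ
  have hs : ∃ δ, Order.succ γ = Order.succ δ := ⟨γ, rfl⟩
  simp only [eBody]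
  rw [dif_neg h0, dif_pos hs]
  have h2 : hs.choose = γ := by
    have h3 := congrArg Ordinal.pred hs.choose_spec
    rw [Ordinal.pred_succ, Ordinal.pred_succ] at h3
    exact h3.symm
  rw [h2]

lemma e_limit {β : Ordinal} (h0 : ¬ β = 0) (hs : ¬ ∃ γ, β = Order.succ γ)
    (hc : β.card ≤ ℵ₀) {ξ : Ordinal} (hξ : ∃ k, ξ < gseq β k) :
    e β ξ = max (e (gseq β (sInf {k | ξ < gseq β k})) ξ) (sInf {k | ξ < gseq β k}) := by
  rw [e_def]
  simp only [eBody]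
  rw [dif_neg h0, dif_neg hs, dif_pos hc, dif_pos hξ]

lemma e_limit_none {β : Ordinal} (h0 : ¬ β = 0) (hs : ¬ ∃ γ, β = Order.succ γ)
    (hc : β.card ≤ ℵ₀) {ξ : Ordinal} (hξ : ¬ ∃ k, ξ < gseq β k) :
    e β ξ = 1 := by
  rw [e_def]
  simp only [eBody]
  rw [dif_neg h0, dif_neg hs, dif_pos hc, dif_neg hξ]

lemma e_nc {β : Ordinal} (h0 : ¬ β = 0) (hs : ¬ ∃ γ, β = Order.succ γ)
    (hc : ¬ β.card ≤ ℵ₀) : e β = fun _ => 1 := by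
  rw [e_def]
  simp only [eBody]
  rw [dif_neg h0, dif_neg hs, dif_neg hc]

lemma e_ge_one (β ξ : Ordinal) : 1 ≤ e β ξ := by
  induction β using Ordinal.induction generalizing ξ with
  | h β IH =>
    rcases Ordinal.zero_or_succ_or_isSuccLimit β with h0 | ⟨γ, hγ⟩ | hl
    · subst h0; rw [e_zero]
    · subst hγ; rw [e_succ]; exact IH γ (Order.lt_succ γ) ξ
    · have h0 : ¬ β = 0 := hl.pos.ne'
      have hs : ¬ ∃ γ, β = Order.succ γ := fun ⟨γ, hγ⟩ =>
        Order.not_isSuccLimit_succ γ (hγ ▸ hl)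
      by_cases hc : β.card ≤ ℵ₀
      · by_cases hξ : ∃ k, ξ < gseq β k
        · rw [e_limit h0 hs hc hξ]
          exact le_trans (IH _ (gseq_lt hl hc _) ξ) (le_max_left _ _)
        · rw [e_limit_none h0 hs hc hξ]
      · rw [e_nc h0 hs hc]

lemma e_junk {β ξ : Ordinal} (h : β ≤ ξ) : e β ξ = 1 := by
  induction β using Ordinal.induction generalizing ξ with
  | h β IH =>
    rcases Ordinal.zero_or_succ_or_isSuccLimit β with h0 | ⟨γ, hγ⟩ | hl
    · subst h0; rw [e_zero]
    · subst hγ; rw [e_succ]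
      exact IH γ (Order.lt_succ γ) ((Order.lt_succ γ).le.trans h)
    · have h0 : ¬ β = 0 := hl.pos.ne'
      have hs : ¬ ∃ γ, β = Order.succ γ := fun ⟨γ, hγ⟩ =>
        Order.not_isSuccLimit_succ γ (hγ ▸ hl)
      by_cases hc : β.card ≤ ℵ₀
      · have hξ : ¬ ∃ k, ξ < gseq β k := by
          rintro ⟨k, hk⟩
          exact absurd ((gseq_lt hl hc k).trans_le h) (lt_irrefl ξ ∘ hk.trans)
        rw [e_limit_none h0 hs hc hξ]
      · rw [e_nc h0 hs hc]


/-- finite-to-one and coherence, proven jointly by induction. -/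
lemma main (β : Ordinal) (hc : β.card ≤ ℵ₀) :
    (∀ n : ℕ, {ξ | ξ < β ∧ e β ξ < n}.Finite) ∧
      ∀ α, α < β → {ξ | ξ < α ∧ e α ξ ≠ e β ξ}.Finite := by
  induction β using Ordinal.induction with
  | h β IH =>
    rcases Ordinal.zero_or_succ_or_isSuccLimit β with h0 | ⟨γ, hγ⟩ | hl
    · subst h0
      constructor
      · intro n
        convert Set.finite_empty using 1
        ext ξ; simp
      · intro α hα; exact absurd hα (zero_le (a := α)).not_gt
    · subst hγ
      have hγlt : γ < Order.succ γ := Order.lt_succ γ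
      have hγc : γ.card ≤ ℵ₀ := (Ordinal.card_le_card hγlt.le).trans hc
      obtain ⟨IH1, IH2⟩ := IH γ hγlt hγc
      constructor
      · intro n
        apply ((IH1 n).union (Set.finite_singleton γ)).subset
        rintro ξ ⟨hξ1, hξ2⟩
        rw [e_succ] at hξ2
        rcases (Order.lt_succ_iff.mp hξ1).lt_or_eq with h | h
        · exact Or.inl ⟨h, hξ2⟩
        · exact Or.inr h
      · intro α hα
        rcases (Order.lt_succ_iff.mp hα).lt_or_eq with h | h
        · apply (IH2 α h).subset
          rintro ξ ⟨hξ1, hξ2⟩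
          rw [e_succ] at hξ2
          exact ⟨hξ1, hξ2⟩
        · subst h
          convert Set.finite_empty using 1
          ext ξ; simp [-Order.succ_eq_add_one, e_succ]
    · -- limit case
      have h0 : ¬ β = 0 := hl.pos.ne'
      have hs : ¬ ∃ γ, β = Order.succ γ := fun ⟨γ, hγ⟩ =>
        Order.not_isSuccLimit_succ γ (hγ ▸ hl)
      have hgl : ∀ k, gseq β k < β := gseq_lt hl hc
      have hgc : ∀ k, (gseq β k).card ≤ ℵ₀ :=
        fun k => (Ordinal.card_le_card (hgl k).le).trans hc
      constructor
      · intro n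
        have hfin : (⋃ k ∈ Finset.range n, {ξ | ξ < gseq β k ∧ e (gseq β k) ξ < n}).Finite :=
          Set.Finite.biUnion (Finset.range n).finite_toSet
            (fun k _ => (IH (gseq β k) (hgl k) (hgc k)).1 n)
        apply hfin.subset
        rintro ξ ⟨hξβ, hξv⟩
        have hex : ∃ k, ξ < gseq β k := gseq_cofinal hl hc hξβ
        set k0 := sInf {k | ξ < gseq β k} with hk0
        have hk0mem : ξ < gseq β k0 := Nat.sInf_mem hex
        rw [e_limit h0 hs hc hex] at hξv
        have h1 : e (gseq β k0) ξ < n := lt_of_le_of_lt (le_max_left _ _) hξv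
        have h2 : k0 < n := lt_of_le_of_lt (le_max_right _ _) hξv
        simp only [Set.mem_iUnion]
        exact ⟨k0, Finset.mem_range.mpr h2, hk0mem, h1⟩
      · intro α hα
        obtain ⟨M, hM⟩ := gseq_cofinal hl hc hα
        have hfin : (⋃ k ∈ Finset.range (M + 1),
            ({ξ | ξ < min α (gseq β k) ∧ e (gseq β k) ξ ≠ e α ξ} ∪
             {ξ | ξ < gseq β k ∧ e (gseq β k) ξ < M + 1})).Finite := by
          apply Set.Finite.biUnion (Finset.range (M + 1)).finite_toSet
          intro k _
          apply Set.Finite.union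
          · rcases lt_trichotomy (gseq β k) α with h | h | h
            · apply ((IH α hα ((Ordinal.card_le_card hα.le).trans hc)).2 (gseq β k) h).subset
              rintro ξ ⟨hξ1, hξ2⟩
              exact ⟨lt_of_lt_of_le hξ1 (min_le_right _ _), fun hh => hξ2 hh⟩
            · convert Set.finite_empty using 1
              ext ξ; simp [h]
            · apply ((IH (gseq β k) (hgl k) (hgc k)).2 α h).subset
              rintro ξ ⟨hξ1, hξ2⟩
              exact ⟨lt_of_lt_of_le hξ1 (min_le_left _ _), fun hh => hξ2 hh.symm⟩
          · exact (IH (gseq β k) (hgl k) (hgc k)).1 (M + 1)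
        apply hfin.subset
        rintro ξ ⟨hξα, hξv⟩
        have hξβ : ξ < β := hξα.trans hα
        have hex : ∃ k, ξ < gseq β k := gseq_cofinal hl hc hξβ
        set k0 := sInf {k | ξ < gseq β k} with hk0
        have hk0mem : ξ < gseq β k0 := Nat.sInf_mem hex
        have hk0M : k0 ≤ M := Nat.sInf_le (hξα.trans hM)
        rw [e_limit h0 hs hc hex] at hξv
        simp only [Set.mem_iUnion]
        refine ⟨k0, Finset.mem_range.mpr (Nat.lt_succ_of_le hk0M), ?_⟩
        by_cases hcase : e (gseq β k0) ξ < k0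
        · exact Or.inr ⟨hk0mem, by omega⟩
        · left
          refine ⟨lt_min hξα hk0mem, ?_⟩
          rw [max_eq_left (not_lt.mp hcase)] at hξv
          exact fun hh => hξv hh.symm

/-! ### The Countryman family `a β` -/

/-- `a β` : the function `e β` with an end-marker `0` at position `β`. -/
def a (β : Ordinal) : Ordinal → ℕ := fun ξ => if ξ = β then 0 else e β ξ

lemma a_self (β : Ordinal) : a β β = 0 := if_pos rfl

lemma a_of_ne {β ξ : Ordinal} (h : ξ ≠ β) : a β ξ = e β ξ := if_neg h

lemma a_marker {β β' : Ordinal} (h : β < β') : a β β ≠ a β' β := by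
  rw [a_self, a_of_ne h.ne]
  exact fun hh => by have := e_ge_one β' β; omega

lemma a_inj : Function.Injective a := by
  intro β β' h
  by_contra hne
  rcases lt_or_gt_of_ne hne with hlt | hlt
  · exact a_marker hlt (by rw [h])
  · exact a_marker hlt (by rw [h])

/-- the set of disagreements of the pair `(β, γ)`, `β ≤ γ`. -/
def DifSet (β γ : Ordinal) : Set Ordinal := {ξ | ξ ≤ β ∧ a β ξ ≠ a γ ξ}

lemma difSet_finite {β γ : Ordinal} (hγ : γ < W1) (h : β ≤ γ) :
    (DifSet β γ).Finite := by
  rcases h.lt_or_eq with hlt | rfl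
  · have hfin := (main γ (card_le_of_lt_W1 hγ)).2 β hlt
    apply (hfin.union (Set.finite_singleton β)).subset
    rintro ξ ⟨hξβ, hξne⟩
    rcases hξβ.lt_or_eq with h1 | h1
    · refine Or.inl ⟨h1, ?_⟩
      rwa [a_of_ne h1.ne, a_of_ne (h1.trans hlt).ne] at hξne
    · exact Or.inr h1
  · convert Set.finite_empty using 1
    ext ξ; simp [DifSet]

/-- the bound for the pair `(β,γ)`. -/
def nn (β γ : Ordinal) : ℕ :=
  if h : (DifSet β γ).Finite then (h.toFinset.sup fun ξ => max (a β ξ) (a γ ξ)) + 1 else 0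

lemma nn_spec {β γ ξ : Ordinal} (hfin : (DifSet β γ).Finite) (hξ : ξ ∈ DifSet β γ) :
    a β ξ < nn β γ ∧ a γ ξ < nn β γ := by
  rw [nn, dif_pos hfin]
  have h1 : max (a β ξ) (a γ ξ) ≤ hfin.toFinset.sup fun ξ => max (a β ξ) (a γ ξ) :=
    Finset.le_sup (f := fun ξ => max (a β ξ) (a γ ξ)) (hfin.mem_toFinset.mpr hξ)
  constructor
  · exact Nat.lt_succ_of_le ((le_max_left _ _).trans h1)
  · exact Nat.lt_succ_of_le ((le_max_right _ _).trans h1)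

/-- the "low-value" set on the first coordinate. -/
def Dset (β γ : Ordinal) : Set Ordinal := {ξ | ξ ≤ β ∧ a β ξ < nn β γ}

/-- the "low-value" set on the second coordinate. -/
def Eset (β γ : Ordinal) : Set Ordinal := {ξ | ξ ≤ γ ∧ a γ ξ < nn β γ}

lemma a_fto {β : Ordinal} (hβ : β < W1) (n : ℕ) : {ξ | ξ ≤ β ∧ a β ξ < n}.Finite := by
  apply (((main β (card_le_of_lt_W1 hβ)).1 n).union (Set.finite_singleton β)).subset
  rintro ξ ⟨hξβ, hξv⟩
  rcases hξβ.lt_or_eq with h1 | h1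
  · rw [a_of_ne h1.ne] at hξv
    exact Or.inl ⟨h1, hξv⟩
  · exact Or.inr h1

lemma dset_finite {β γ : Ordinal} (hβ : β < W1) : (Dset β γ).Finite := a_fto hβ _

lemma eset_finite {β γ : Ordinal} (hγ : γ < W1) : (Eset β γ).Finite := a_fto hγ _

/-- transfer of low values between the two coordinates. -/
lemma DE {β γ ξ : Ordinal} (hγ : γ < W1) (h : β ≤ γ) (hξ : ξ ≤ β) :
    (a β ξ < nn β γ ↔ a γ ξ < nn β γ) := by
  by_cases hne : a β ξ = a γ ξ
  · rw [hne]
  · have := nn_spec (difSet_finite hγ h) ⟨hξ, hne⟩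
    exact ⟨fun _ => this.2, fun _ => this.1⟩

/-- the recorded value lists. -/
def sList (β γ : Ordinal) : List ℕ :=
  if h : (Dset β γ).Finite then (h.toFinset.sort (· ≤ ·)).map (a β) else []

def tList (β γ : Ordinal) : List ℕ :=
  if h : (Eset β γ).Finite then (h.toFinset.sort (· ≤ ·)).map (a γ) else []

/-- the countable datum attached to a pair. -/
def τ (β γ : Ordinal) : ℕ × List ℕ × List ℕ := (nn β γ, sList β γ, tList β γ)

/-- Key list lemma: two sorted lists which have the same members below `δ` and whose
value-lists agree take equal values at any common member below `δ`. -/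
lemma listKey (f f' : Ordinal → ℕ) (δ : Ordinal) :
    ∀ (l l' : List Ordinal), l.Pairwise (· < ·) → l'.Pairwise (· < ·) →
    (∀ η, η < δ → (η ∈ l ↔ η ∈ l')) → l.map f = l'.map f' →
    ∀ ξ, ξ ∈ l → ξ < δ → f ξ = f' ξ := by
  intro l
  induction l with
  | nil => intro l' _ _ _ _ ξ hξ _; cases hξ
  | cons aa tl IHl =>
    intro l' hl hl' hmem hmap ξ hξ hξδ
    obtain ⟨haatl, htl⟩ := List.pairwise_cons.mp hl
    cases l' with
    | nil => simp at hmap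
    | cons aa' tl' =>
      obtain ⟨haatl', htl'⟩ := List.pairwise_cons.mp hl'
      simp only [List.map_cons, List.cons.injEq] at hmap
      obtain ⟨hmap1, hmap2⟩ := hmap
      have haaδ : aa < δ := by
        rcases List.mem_cons.mp hξ with h | h
        · exact h ▸ hξδ
        · exact (haatl ξ h).trans hξδ
      have haal' : aa ∈ aa' :: tl' := (hmem aa haaδ).mp List.mem_cons_self
      have haa'le : aa' ≤ aa := by
        rcases List.mem_cons.mp haal' with h | h
        · exact h.ge
        · exact (haatl' aa h).le
      have haa'δ : aa' < δ := lt_of_le_of_lt haa'le haaδ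
      have haa'l : aa' ∈ aa :: tl := (hmem aa' haa'δ).mpr List.mem_cons_self
      have haale : aa ≤ aa' := by
        rcases List.mem_cons.mp haa'l with h | h
        · exact h.ge
        · exact (haatl aa' h).le
      have haaeq : aa = aa' := le_antisymm haale haa'le
      rcases List.mem_cons.mp hξ with h | h
      · rw [haaeq] at hmap1
        rw [h, haaeq]
        exact hmap1
      · refine IHl tl' htl htl' ?_ hmap2 ξ h hξδ
        intro η hηδ
        constructor
        · intro hη
          have : η ∈ aa' :: tl' := (hmem η hηδ).mp (List.mem_cons_of_mem aa hη)
          rcases List.mem_cons.mp this with h1 | h1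
          · exact absurd (haatl η hη) (by rw [h1, ← haaeq]; exact lt_irrefl aa)
          · exact h1
        · intro hη
          have : η ∈ aa :: tl := (hmem η hηδ).mpr (List.mem_cons_of_mem aa' hη)
          rcases List.mem_cons.mp this with h1 | h1
          · exact absurd (haatl' η hη) (by rw [h1, haaeq]; exact lt_irrefl aa')
          · exact h1

/-! ### The key comparability lemma -/

lemma subkey {β γ β' γ' : Ordinal} (hβ : β < W1) (hγ : γ < W1) (hβ' : β' < W1) (hγ' : γ' < W1)
    (h1 : β ≤ γ) (h2 : β' ≤ γ') (hτ : τ β γ = τ β' γ')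
    {ξ₀ : Ordinal} (hξβ : ξ₀ ≤ β) (hξβ' : ξ₀ ≤ β')
    (hlow : ∀ η, η < ξ₀ → a β η = a β' η)
    (hval : a β ξ₀ < a β' ξ₀) :
    Pi.Lex (· < ·) (@fun _ => (· < ·)) (a β) (a β') ∧
      Pi.Lex (· < ·) (@fun _ => (· < ·)) (a γ) (a γ') := by
  obtain ⟨hn, hsl, htll⟩ : nn β γ = nn β' γ' ∧ sList β γ = sList β' γ' ∧
      tList β γ = tList β' γ' := by
    simpa [τ, Prod.ext_iff] using hτ
  set n := nn β γ with hndef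
  have hdif : (DifSet β γ).Finite := difSet_finite hγ h1
  have hdif' : (DifSet β' γ').Finite := difSet_finite hγ' h2
  have hEfin : (Eset β γ).Finite := eset_finite hγ
  have hE'fin : (Eset β' γ').Finite := eset_finite hγ'
  have hDfin : (Dset β γ).Finite := dset_finite hβ
  have hD'fin : (Dset β' γ').Finite := dset_finite hβ'
  -- agreement of the pair off the low sets
  have agree1 : ∀ η, η ≤ β → n ≤ a β η → a γ η = a β η := by
    intro η hη hnv
    by_contra hne
    exact absurd (nn_spec hdif ⟨hη, fun hh => hne hh.symm⟩).1 (not_lt.mpr hnv)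
  have agree1' : ∀ η, η ≤ β' → n ≤ a β' η → a γ' η = a β' η := by
    intro η hη hnv
    by_contra hne
    refine absurd (nn_spec hdif' ⟨hη, fun hh => hne hh.symm⟩).1 (not_lt.mpr ?_)
    rwa [← hn]
  -- low-value transfer, in terms of `n`
  have DEn : ∀ ρ, ρ ≤ β → (a β ρ < n ↔ a γ ρ < n) := fun ρ hρ => DE hγ h1 hρ
  have DE'n : ∀ ρ, ρ ≤ β' → (a β' ρ < n ↔ a γ' ρ < n) := by
    intro ρ hρ
    have h := DE hγ' h2 hρ
    rwa [← hn] at h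
  -- membership transfer between the E-sets below ξ₀
  have memE_iff : ∀ η, η < ξ₀ → (η ∈ Eset β γ ↔ η ∈ Eset β' γ') := by
    intro η hη
    have hηβ : η ≤ β := hη.le.trans hξβ
    have hηβ' : η ≤ β' := hη.le.trans hξβ'
    constructor
    · rintro ⟨-, hv⟩
      refine ⟨hηβ'.trans h2, ?_⟩
      have hx : a γ' η < n :=
        (DE'n η hηβ').mp (by rw [← hlow η hη]; exact (DEn η hηβ).mpr hv)
      rwa [hn] at hx
    · rintro ⟨-, hv⟩
      refine ⟨hηβ.trans h1, ?_⟩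
      have hv2 : a γ' η < n := by rwa [← hn] at hv
      exact (DEn η hηβ).mp (by rw [hlow η hη]; exact (DE'n η hηβ').mpr hv2)
  -- the sorted lists
  have htE : tList β γ = (hEfin.toFinset.sort (· ≤ ·)).map (a γ) := by
    rw [tList, dif_pos hEfin]
  have htE' : tList β' γ' = (hE'fin.toFinset.sort (· ≤ ·)).map (a γ') := by
    rw [tList, dif_pos hE'fin]
  have hsD : sList β γ = (hDfin.toFinset.sort (· ≤ ·)).map (a β) := by
    rw [sList, dif_pos hDfin]
  have hsD' : sList β' γ' = (hD'fin.toFinset.sort (· ≤ ·)).map (a β') := by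
    rw [sList, dif_pos hD'fin]
  -- equality of the second coordinates below ξ₀
  have blow : ∀ η, η < ξ₀ → a γ η = a γ' η := by
    intro η hη
    have hηβ : η ≤ β := hη.le.trans hξβ
    have hηβ' : η ≤ β' := hη.le.trans hξβ'
    by_cases hlowv : a β η < n
    · -- both in the E-sets: use the recorded lists
      have hmemE : η ∈ Eset β γ := ⟨hηβ.trans h1, (DE hγ h1 hηβ).mp hlowv⟩
      refine listKey (a γ) (a γ') ξ₀ (hEfin.toFinset.sort (· ≤ ·))
          (hE'fin.toFinset.sort (· ≤ ·)) (Finset.sortedLT_sort _).pairwise (Finset.sortedLT_sort _).pairwise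
          ?_ ?_ η ?_ hη
      · intro ρ hρ
        simp only [Finset.mem_sort, Set.Finite.mem_toFinset]
        exact memE_iff ρ hρ
      · rw [← htE, ← htE', htll]
      · rw [Finset.mem_sort, Set.Finite.mem_toFinset]
        exact hmemE
    · push_neg at hlowv
      have hlowv' : n ≤ a β' η := by rw [← hlow η hη]; exact hlowv
      rw [agree1 η hηβ hlowv, agree1' η hηβ' hlowv', hlow η hη]
  -- the value comparison at ξ₀
  have bval : a γ ξ₀ < a γ' ξ₀ := by
    by_cases hD : a β ξ₀ < n
    · by_cases hD' : a β' ξ₀ < n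
      · -- impossible: the recorded s-lists force equal values at ξ₀
        exfalso
        have heq : a β ξ₀ = a β' ξ₀ := by
          refine listKey (a β) (a β') (Order.succ ξ₀) (hDfin.toFinset.sort (· ≤ ·))
              (hD'fin.toFinset.sort (· ≤ ·))
              (Finset.sortedLT_sort _).pairwise (Finset.sortedLT_sort _).pairwise ?_ ?_ ξ₀ ?_
              (Order.lt_succ ξ₀)
          · intro ρ hρ
            rw [Order.lt_succ_iff] at hρ
            simp only [Finset.mem_sort, Set.Finite.mem_toFinset]
            rcases hρ.lt_or_eq with h | h
            · have hρβ : ρ ≤ β := h.le.trans hξβ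
              have hρβ' : ρ ≤ β' := h.le.trans hξβ'
              constructor
              · rintro ⟨-, hv⟩
                refine ⟨hρβ', ?_⟩
                rw [← hn, ← hlow ρ h]
                exact hv
              · rintro ⟨-, hv⟩
                refine ⟨hρβ, ?_⟩
                have hv2 : a β' ρ < n := by rwa [← hn] at hv
                show a β ρ < n
                rw [hlow ρ h]
                exact hv2
            · subst h
              constructor
              · rintro -; exact ⟨hξβ', by rw [← hn]; exact hD'⟩
              · rintro -; exact ⟨hξβ, hD⟩
          · rw [← hsD, ← hsD', hsl]
          · rw [Finset.mem_sort, Set.Finite.mem_toFinset]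
            exact ⟨hξβ, hD⟩
        exact hval.ne heq
      · -- `a γ ξ₀ < n ≤ a γ' ξ₀`
        have hg : a γ ξ₀ < n := (DE hγ h1 hξβ).mp hD
        have hg' : n ≤ a γ' ξ₀ := by
          by_contra hcon
          push_neg at hcon
          exact hD' ((DE'n ξ₀ hξβ').mpr hcon)
        exact lt_of_lt_of_le hg hg'
    · by_cases hD' : a β' ξ₀ < n
      · exact absurd hval (not_lt.mpr ((not_lt.mp hD).trans' hD'.le))
      · push_neg at hD hD'
        rw [agree1 ξ₀ hξβ hD, agree1' ξ₀ hξβ' hD']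
        exact hval
  exact ⟨⟨ξ₀, hlow, hval⟩, ⟨ξ₀, blow, bval⟩⟩

lemma key {β γ β' γ' : Ordinal} (hβ : β < W1) (hγ : γ < W1) (hβ' : β' < W1) (hγ' : γ' < W1)
    (h1 : β ≤ γ) (h2 : β' ≤ γ') (hτ : τ β γ = τ β' γ') :
    (toLex (a β) ≤ toLex (a β') ∧ toLex (a γ) ≤ toLex (a γ')) ∨
    (toLex (a β') ≤ toLex (a β) ∧ toLex (a γ') ≤ toLex (a γ)) := by
  by_cases hββ' : β = β'
  · subst hββ'
    rcases le_total (toLex (a γ)) (toLex (a γ')) with h | h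
    · exact Or.inl ⟨le_rfl, h⟩
    · exact Or.inr ⟨le_rfl, h⟩
  · set Δ : Set Ordinal := {ξ | a β ξ ≠ a β' ξ} with hΔdef
    have hne : Δ.Nonempty := by
      rcases lt_or_gt_of_ne hββ' with h | h
      · exact ⟨β, a_marker h⟩
      · exact ⟨β', fun hh => a_marker h hh.symm⟩
    set ξ₀ : Ordinal := sInf Δ with hξ₀def
    have hξ₀mem : ξ₀ ∈ Δ := csInf_mem hne
    have hlow : ∀ η, η < ξ₀ → a β η = a β' η := by
      intro η hη
      by_contra hcon
      exact absurd (csInf_le (OrderBot.bddBelow Δ) hcon) (not_le.mpr hη)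
    have hξβstudent : ξ₀ ≤ β ∧ ξ₀ ≤ β' := by
      rcases lt_or_gt_of_ne hββ' with h | h
      · have : ξ₀ ≤ β := csInf_le (OrderBot.bddBelow Δ) (a_marker h)
        exact ⟨this, this.trans h.le⟩
      · have : ξ₀ ≤ β' := csInf_le (OrderBot.bddBelow Δ) (fun hh => a_marker h hh.symm)
        exact ⟨this.trans h.le, this⟩
    obtain ⟨hξβ, hξβ'⟩ := hξβstudent
    rcases lt_or_gt_of_ne hξ₀mem with hv | hv
    · obtain ⟨hA, hB⟩ := subkey hβ hγ hβ' hγ' h1 h2 hτ hξβ hξβ' hlow hv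
      exact Or.inl ⟨le_of_lt hA, le_of_lt hB⟩
    · obtain ⟨hA, hB⟩ := subkey hβ' hγ' hβ hγ h2 h1 hτ.symm hξβ' hξβ
        (fun η hη => (hlow η hη).symm) hv
      exact Or.inr ⟨le_of_lt hA, le_of_lt hB⟩

/-! ### Assembly of the Countryman line -/

/-- The underlying type of the line: a type of cardinality `ℵ₁`. -/
def L : Type := W1.ToType

def tmap : L → Ordinal := fun x => ((Ordinal.ToType.mk (o := W1)).symm x).1

lemma tmap_lt (x : L) : tmap x < W1 := ((Ordinal.ToType.mk (o := W1)).symm x).2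

lemma tmap_inj : Function.Injective tmap :=
  fun _ _ h => (Ordinal.ToType.mk (o := W1)).symm.injective (Subtype.ext h)

/-- the embedding into the lexicographic order. -/
def F : L → Lex (Ordinal → ℕ) := fun x => toLex (a (tmap x))

lemma F_inj : Function.Injective F :=
  fun _ _ h => tmap_inj (a_inj (toLex.injective h))

/-- The Countryman order on `L`. -/
def LO : LinearOrder L := LinearOrder.lift' F F_inj

/-- the countable colouring datum of a pair. -/
def dataF (p : L × L) : (ℕ × List ℕ × List ℕ) × Bool :=
  if tmap p.1 ≤ tmap p.2 then (τ (tmap p.1) (tmap p.2), false)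
  else (τ (tmap p.2) (tmap p.1), true)

/-- the chains. -/
def CC (m : ℕ) : Set (L × L) := {p | Encodable.encode (dataF p) = m}

lemma CC_union : (⋃ m, CC m) = Set.univ :=
  Set.eq_univ_iff_forall.mpr fun p => Set.mem_iUnion.mpr ⟨Encodable.encode (dataF p), rfl⟩

lemma CC_chain (m : ℕ) :
    IsChain (fun p q : L × L => LO.le p.1 q.1 ∧ LO.le p.2 q.2) (CC m) := by
  intro p hp q hq _
  have hd : dataF p = dataF q := Encodable.encode_injective ((hp : _ = m).trans hq.symm)
  have hle : ∀ x y : L, (LO.le x y) = (F x ≤ F y) := fun x y => rfl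
  by_cases h1 : tmap p.1 ≤ tmap p.2 <;> by_cases h2 : tmap q.1 ≤ tmap q.2
  · rw [dataF, if_pos h1, dataF, if_pos h2] at hd
    have hτeq : τ (tmap p.1) (tmap p.2) = τ (tmap q.1) (tmap q.2) := (Prod.ext_iff.mp hd).1
    rcases key (tmap_lt p.1) (tmap_lt p.2) (tmap_lt q.1) (tmap_lt q.2) h1 h2 hτeq with
      ⟨hA, hB⟩ | ⟨hA, hB⟩
    · exact Or.inl ⟨hA, hB⟩
    · exact Or.inr ⟨hA, hB⟩
  · rw [dataF, if_pos h1, dataF, if_neg h2] at hd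
    exact absurd (Prod.ext_iff.mp hd).2 (by simp)
  · rw [dataF, if_neg h1, dataF, if_pos h2] at hd
    exact absurd (Prod.ext_iff.mp hd).2 (by simp)
  · rw [dataF, if_neg h1, dataF, if_neg h2] at hd
    have hτeq : τ (tmap p.2) (tmap p.1) = τ (tmap q.2) (tmap q.1) := (Prod.ext_iff.mp hd).1
    rcases key (tmap_lt p.2) (tmap_lt p.1) (tmap_lt q.2) (tmap_lt q.1)
      (le_of_not_ge h1) (le_of_not_ge h2) hτeq with ⟨hA, hB⟩ | ⟨hA, hB⟩
    · exact Or.inl ⟨hB, hA⟩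
    · exact Or.inr ⟨hB, hA⟩

lemma card_L : Cardinal.mk L = Cardinal.aleph 1 :=
  (Cardinal.mk_toType W1).trans (Cardinal.card_ord _)

end Stmt12Aux

end

/-- There is a linear order `L` of cardinality `ℵ₁` (a Countryman line) such that
`L × L`, ordered coordinatewise, is the union of countably many chains. -/
theorem stmt12 :
    ∃ (L : Type) (_ : LinearOrder L), #L = Cardinal.aleph 1 ∧
      ∃ C : ℕ → Set (L × L),
        (⋃ n, C n) = Set.univ ∧
        ∀ n, IsChain (fun p q : L × L => p.1 ≤ q.1 ∧ p.2 ≤ q.2) (C n) := by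
  exact ⟨Stmt12Aux.L, Stmt12Aux.LO, Stmt12Aux.card_L,
    Stmt12Aux.CC, Stmt12Aux.CC_union, Stmt12Aux.CC_chain⟩
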